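/- For all natural numbers m and n: (1/π) ∫₀^π (cos φ)^n · cos(mφ) dφ equals 2^{−n} · C(n, (n+m)/2) if m ≤ n and m ≡ n (mod 2), and equals 0 otherwise. -/
import Mathlib

open Real intervalIntegral

noncomputable def Jint (n m : ℕ) : ℝ :=
  ∫ φ in (0:ℝ)..Real.pi, (Real.cos φ) ^ n * Real.cos (m * φ)

lemma J_zero (m : ℕ) : Jint 0 m = if m = 0 then Real.pi else 0 := by
  unfold Jint
  rcases eq_or_ne m 0 with h | h
  · simp [h]
  · have hc : (m:ℝ) ≠ 0 := Nat.cast_ne_zero.mpr h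
    rw [if_neg h]
    simp only [pow_zero, one_mul]
    have := intervalIntegral.integral_comp_mul_left (fun x => Real.cos x) hc (a := 0) (b := Real.pi)
    rw [this]
    simp [Real.sin_nat_mul_pi]

lemma cos_cos (a b : ℝ) :
    Real.cos a * Real.cos b = (Real.cos (a + b) + Real.cos (a - b)) / 2 := by
  rw [Real.cos_add, Real.cos_sub]; ring

lemma J_succ_succ (n m : ℕ) : Jint (n+1) (m+1) = (Jint n (m+2) + Jint n m) / 2 := by
  unfold Jint
  have key : ∀ φ : ℝ, (Real.cos φ) ^ (n+1) * Real.cos ((m+1) * φ) =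
      ((Real.cos φ) ^ n * Real.cos ((m+2) * φ) + (Real.cos φ) ^ n * Real.cos (m * φ)) / 2 := by
    intro φ
    have h := cos_cos (((m:ℝ)+1) * φ) φ
    have e1 : ((m:ℝ)+1) * φ + φ = ((m:ℝ)+2) * φ := by ring
    have e2 : ((m:ℝ)+1) * φ - φ = (m:ℝ) * φ := by ring
    rw [e1, e2] at h
    rw [pow_succ]
    calc Real.cos φ ^ n * Real.cos φ * (Real.cos (((m:ℝ)+1) * φ))
        = Real.cos φ ^ n * (Real.cos (((m:ℝ)+1) * φ) * Real.cos φ) := by ring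
      _ = _ := by rw [h]; ring
  push_cast
  rw [intervalIntegral.integral_congr (g := fun φ => ((Real.cos φ) ^ n * Real.cos ((m+2) * φ) + (Real.cos φ) ^ n * Real.cos (m * φ)) / 2) (fun φ _ => key φ)]
  have i1 : IntervalIntegrable (fun φ => (Real.cos φ) ^ n * Real.cos ((m+2) * φ)) MeasureTheory.volume 0 Real.pi := by
    apply Continuous.intervalIntegrable; fun_prop
  have i2 : IntervalIntegrable (fun φ => (Real.cos φ) ^ n * Real.cos ((m:ℝ) * φ)) MeasureTheory.volume 0 Real.pi := by
    apply Continuous.intervalIntegrable; fun_prop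
  rw [intervalIntegral.integral_div, intervalIntegral.integral_add i1 i2]

lemma J_succ_zero (n : ℕ) : Jint (n+1) 0 = Jint n 1 := by
  unfold Jint
  apply intervalIntegral.integral_congr
  intro φ _
  push_cast
  rw [pow_succ]
  simp [Real.cos_zero]

noncomputable def Rhs (n m : ℕ) : ℝ :=
  if m ≤ n ∧ m % 2 = n % 2 then (n.choose ((n + m) / 2) : ℝ) / 2 ^ n else 0

lemma Rhs_succ_succ (n m : ℕ) : Rhs (n+1) (m+1) = (Rhs n (m+2) + Rhs n m) / 2 := by
  unfold Rhs
  rcases eq_or_ne (m % 2) (n % 2) with hp | hp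
  · -- parity matches
    rcases lt_trichotomy m n with hlt | heq | hgt
    · have hle : m + 2 ≤ n := by omega
      rw [if_pos ⟨by omega, by omega⟩, if_pos ⟨hle, by omega⟩, if_pos ⟨by omega, hp⟩]
      have e1 : (n + 1 + (m + 1)) / 2 = (n + m) / 2 + 1 := by omega
      have e2 : (n + (m + 2)) / 2 = (n + m) / 2 + 1 := by omega
      rw [e1, e2, Nat.choose_succ_succ]
      push_cast
      ring
    · subst heq
      rw [if_pos ⟨le_refl _, rfl⟩, if_neg (by omega), if_pos ⟨le_refl _, rfl⟩]
      have e1 : (m + 1 + (m + 1)) / 2 = m + 1 := by omega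
      have e2 : (m + m) / 2 = m := by omega
      rw [e1, e2, Nat.choose_self, Nat.choose_self]
      push_cast
      ring
    · rw [if_neg (by omega), if_neg (by omega), if_neg (by omega)]
      norm_num
  · rw [if_neg (by omega), if_neg (by omega), if_neg (by omega)]
    norm_num

lemma Rhs_succ_zero (n : ℕ) : Rhs (n+1) 0 = Rhs n 1 := by
  unfold Rhs
  rcases Nat.even_or_odd n with ⟨k, hk⟩ | ⟨k, hk⟩
  · subst hk
    rw [if_neg (by omega), if_neg (by omega)]
  ·
    subst hk
    rw [if_pos ⟨by omega, by omega⟩, if_pos ⟨by omega, by omega⟩]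
    have e1 : (2 * k + 1 + 1 + 0) / 2 = k + 1 := by omega
    have e2 : (2 * k + 1 + 1) / 2 = k + 1 := by omega
    rw [e1]
    have h3 : (2 * k + 1 + 1).choose (k + 1) = (2 * k + 1).choose k + (2 * k + 1).choose (k + 1) :=
      Nat.choose_succ_succ _ _
    have h4 : (2 * k + 1).choose k = (2 * k + 1).choose (k + 1) := by
      rw [← Nat.choose_symm (by omega : k ≤ 2 * k + 1)]
      congr 1
      omega
    rw [h3, h4]
    push_cast
    ring

lemma J_eq (n : ℕ) : ∀ m, Jint n m = Real.pi * Rhs n m := by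
  induction n with
  | zero =>
    intro m
    rw [J_zero, Rhs]
    rcases eq_or_ne m 0 with h | h
    · subst h; simp
    · rw [if_neg h, if_neg (by omega)]; ring
  | succ n ih =>
    intro m
    cases m with
    | zero => rw [J_succ_zero, Rhs_succ_zero, ih]
    | succ m => rw [J_succ_succ, Rhs_succ_succ, ih, ih]; ring

/-- `(1/π) ∫₀^π (cos φ)^n · cos(mφ) dφ` equals `2^(−n) · C(n, (n+m)/2)` when `m ≤ n` and
`m ≡ n (mod 2)`, and equals `0` otherwise. -/
theorem integral_cos_pow_mul_cos (m n : ℕ) :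
    (1 / Real.pi) * ∫ φ in (0:ℝ)..Real.pi, (Real.cos φ) ^ n * Real.cos (m * φ) =
      if m ≤ n ∧ m % 2 = n % 2 then (n.choose ((n + m) / 2) : ℝ) / 2 ^ n else 0 := by
  have h := J_eq n m
  unfold Jint Rhs at h
  rw [h]
  rw [← mul_assoc, one_div, inv_mul_cancel₀ Real.pi_ne_zero, one_mul]
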